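/- Let p be a prime number with p ≡ -1 (mod 8). Then ℤ/pℤ does not satisfy the acyclic matching property. More precisely, for the set A of nonzero quadratic residues modulo p, there is no acyclic matching from A to A. -/

import Mathlib

/-- A matching from a finite subset `A` to a finite subset `B` of an additive abelian
group `G` is a bijection `f : A → B` such that `a + f a ∉ A` for all `a ∈ A`. -/
def IsAddMatching {G : Type*} [AddCommGroup G] (A B : Finset G) (f : ↥A ≃ ↥B) : Prop :=
  ∀ a : ↥A, (a : G) + (f a : G) ∉ A

/-- The multiplicity function of `f : A → B`, sending `x : G` to `|{a ∈ A : a + f a = x}|`. -/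
noncomputable def multFn {G : Type*} [AddCommGroup G] (A B : Finset G) (f : ↥A ≃ ↥B)
    (x : G) : ℕ :=
  Nat.card {a : ↥A // (a : G) + (f a : G) = x}

/-- A matching `f : A → B` is acyclic if every matching `g : A → B` with the same
multiplicity function equals `f`. -/
def IsAcyclicAddMatching {G : Type*} [AddCommGroup G] (A B : Finset G) (f : ↥A ≃ ↥B) :
    Prop :=
  IsAddMatching A B f ∧
    ∀ g : ↥A ≃ ↥B, IsAddMatching A B g → multFn A B f = multFn A B g → f = g

/-- A group `G` has the acyclic matching property if for all finite subsets `A`, `B` of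
`G` with `|A| = |B|` and `0 ∉ B` there is an acyclic matching from `A` to `B`. -/
def HasAcyclicMatchingProperty (G : Type*) [AddCommGroup G] : Prop :=
  ∀ A B : Finset G, A.card = B.card → (0 : G) ∉ B →
    ∃ f : ↥A ≃ ↥B, IsAcyclicAddMatching A B f

/-- The set of nonzero quadratic residues modulo `p`. -/
def quadRes (p : ℕ) : Finset (ZMod p) :=
  ((Finset.range p).image fun n : ℕ => ((n : ZMod p)) ^ 2).erase 0

/-- A finite set carrying a fixed-point-free involution has even cardinality. -/
lemma even_card_of_fpf_involution {α : Type*} [DecidableEq α] :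
    ∀ (n : ℕ) (s : Finset α) (_ : s.card = n) (f : α → α),
      (∀ a ∈ s, f a ∈ s) → (∀ a ∈ s, f (f a) = a) → (∀ a ∈ s, f a ≠ a) → Even s.card := by
  intro n
  induction n using Nat.strong_induction_on with
  | _ n ih =>
    intro s hs f hmaps hinv hfpf
    rcases s.eq_empty_or_nonempty with rfl | ⟨a, ha⟩
    · simp
    · have hfa : f a ∈ s := hmaps a ha
      have hne : f a ≠ a := hfpf a ha
      set t := (s.erase a).erase (f a) with ht
      have hmemfa : f a ∈ s.erase a := Finset.mem_erase.2 ⟨hne, hfa⟩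
      have hcard : t.card = n - 2 := by
        rw [ht, Finset.card_erase_of_mem hmemfa, Finset.card_erase_of_mem ha, hs]; omega
      have hmem : ∀ b, b ∈ t ↔ b ∈ s ∧ b ≠ a ∧ b ≠ f a := by
        intro b
        simp only [ht, Finset.mem_erase]
        tauto
      have hmaps' : ∀ b ∈ t, f b ∈ t := by
        intro b hb
        obtain ⟨hbs, hba, hbfa⟩ := (hmem b).1 hb
        refine (hmem (f b)).2 ⟨hmaps b hbs, ?_, ?_⟩
        · intro h
          apply hbfa
          rw [← hinv b hbs, h]
        · intro h
          have := congrArg f h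
          rw [hinv b hbs, hinv a ha] at this
          exact hba this
      have hinv' : ∀ b ∈ t, f (f b) = b := fun b hb => hinv b ((hmem b).1 hb).1
      have hfpf' : ∀ b ∈ t, f b ≠ b := fun b hb => hfpf b ((hmem b).1 hb).1
      have hn2 : 2 ≤ n := by
        have hsub : ({a, f a} : Finset α) ⊆ s := by
          intro x hx
          simp only [Finset.mem_insert, Finset.mem_singleton] at hx
          rcases hx with rfl | rfl
          · exact ha
          · exact hfa
        have hle := Finset.card_le_card hsub
        rwa [Finset.card_pair (Ne.symm hne), hs] at hle
      have heven : Even t.card :=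
        ih (n - 2) (by omega) t hcard f hmaps' hinv' hfpf'
      rw [hcard] at heven
      rcases heven with ⟨k, hk⟩
      rw [hs]
      exact ⟨k + 1, by omega⟩

lemma mem_quadRes {p : ℕ} [NeZero p] {x : ZMod p} :
    x ∈ quadRes p ↔ x ≠ 0 ∧ ∃ y : ZMod p, y ^ 2 = x := by
  unfold quadRes
  rw [Finset.mem_erase]
  constructor
  · rintro ⟨hx, hmem⟩
    obtain ⟨n, -, hn⟩ := Finset.mem_image.1 hmem
    exact ⟨hx, ⟨(n : ZMod p), hn⟩⟩
  · rintro ⟨hx, y, hy⟩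
    refine ⟨hx, Finset.mem_image.2 ⟨y.val, Finset.mem_range.2 (ZMod.val_lt y), ?_⟩⟩
    rw [ZMod.natCast_val, ZMod.cast_id, hy]

lemma quadRes_mul_mem {p : ℕ} (hp : p.Prime) {x y : ZMod p}
    (hx : x ∈ quadRes p) (hy : y ∈ quadRes p) : x * y ∈ quadRes p := by
  haveI : Fact p.Prime := ⟨hp⟩
  rw [mem_quadRes] at *
  obtain ⟨hx0, a, ha⟩ := hx
  obtain ⟨hy0, b, hb⟩ := hy
  exact ⟨mul_ne_zero hx0 hy0, ⟨a * b, by rw [mul_pow, ha, hb]⟩⟩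

lemma two_mem_quadRes {p : ℕ} (hp : p.Prime) (hmod : p % 8 = 7) :
    (2 : ZMod p) ∈ quadRes p := by
  haveI : Fact p.Prime := ⟨hp⟩
  have hp2 : p ≠ 2 := by omega
  have hsq : IsSquare (2 : ZMod p) := (ZMod.exists_sq_eq_two_iff hp2).2 (Or.inr hmod)
  obtain ⟨r, hr⟩ := hsq
  have h2 : (2 : ZMod p) ≠ 0 := by
    have : ((2 : ℕ) : ZMod p) ≠ 0 := by
      rw [Ne, ZMod.natCast_eq_zero_iff]
      intro h
      have := Nat.le_of_dvd (by norm_num) h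
      omega
    simpa using this
  exact mem_quadRes.2 ⟨h2, ⟨r, by rw [sq, ← hr]⟩⟩

lemma card_quadRes {p : ℕ} (hp : p.Prime) (hodd : p % 2 = 1) :
    2 * (quadRes p).card = p - 1 := by
  haveI : Fact p.Prime := ⟨hp⟩
  classical
  set T : Finset (ZMod p) := Finset.univ.erase 0 with hT
  have himg : T.image (fun z => z ^ 2) = quadRes p := by
    ext x
    rw [Finset.mem_image, mem_quadRes]
    constructor
    · rintro ⟨z, hz, rfl⟩
      have hz0 : z ≠ 0 := (Finset.mem_erase.1 hz).1
      exact ⟨pow_ne_zero 2 hz0, ⟨z, rfl⟩⟩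
    · rintro ⟨hx0, y, rfl⟩
      have hy0 : y ≠ 0 := fun h => hx0 (by rw [h]; ring)
      exact ⟨y, Finset.mem_erase.2 ⟨hy0, Finset.mem_univ y⟩, rfl⟩
  have hTcard : T.card = p - 1 := by
    rw [hT, Finset.card_erase_of_mem (Finset.mem_univ 0), Finset.card_univ, ZMod.card]
  have hfib : ∀ x ∈ T.image (fun z => z ^ 2),
      (T.filter fun z => z ^ 2 = x).card = 2 := by
    intro x hx
    obtain ⟨y, hy, rfl⟩ := Finset.mem_image.1 hx
    have hy0 : y ≠ 0 := (Finset.mem_erase.1 hy).1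
    have hyn : y ≠ -y := by
      intro h
      have h2y : (2 : ZMod p) * y = 0 := by linear_combination h
      have h2 : (2 : ZMod p) ≠ 0 := by
        have : ((2 : ℕ) : ZMod p) ≠ 0 := by
          rw [Ne, ZMod.natCast_eq_zero_iff]
          intro h'
          have := Nat.le_of_dvd (by norm_num) h'
          have := hp.two_le
          omega
        simpa using this
      rcases mul_eq_zero.1 h2y with h | h
      · exact h2 h
      · exact hy0 h
    have : (T.filter fun z => z ^ 2 = y ^ 2) = {y, -y} := by
      ext z
      simp only [Finset.mem_filter, Finset.mem_insert, Finset.mem_singleton, hT,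
        Finset.mem_erase, Finset.mem_univ, and_true]
      constructor
      · rintro ⟨hz0, hz⟩
        have : z * z = y * y := by rw [← sq, ← sq, hz]
        exact mul_self_eq_mul_self_iff.1 this
      · rintro (rfl | rfl)
        · exact ⟨hy0, rfl⟩
        · exact ⟨neg_ne_zero.2 hy0, by ring⟩
    rw [this, Finset.card_pair hyn]
  have := Finset.card_eq_sum_card_fiberwise
    (fun z (hz : z ∈ T) => Finset.mem_image_of_mem (fun z => z ^ 2) hz)
  rw [Finset.sum_congr rfl hfib, Finset.sum_const, smul_eq_mul] at this
  rw [himg] at this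
  omega

/-- Let `p` be a prime with `p ≡ -1 (mod 8)`. Then `ℤ/pℤ` does not satisfy the acyclic
matching property; more precisely, there is no acyclic matching from the set `A` of
nonzero quadratic residues modulo `p` to itself. -/
theorem stmt5 (p : ℕ) (hp : p.Prime) (hmod : p % 8 = 7) :
    ¬ HasAcyclicMatchingProperty (ZMod p) ∧
      ¬ ∃ f : ↥(quadRes p) ≃ ↥(quadRes p), IsAcyclicAddMatching (quadRes p) (quadRes p) f := by
  haveI : Fact p.Prime := ⟨hp⟩
  haveI : NeZero p := ⟨hp.pos.ne'⟩
  have key : ¬ ∃ f : ↥(quadRes p) ≃ ↥(quadRes p),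
      IsAcyclicAddMatching (quadRes p) (quadRes p) f := by
    rintro ⟨f, hmatch, hacyc⟩
    -- f.symm is also a matching
    have hmatch' : IsAddMatching (quadRes p) (quadRes p) f.symm := by
      intro a
      have h := hmatch (f.symm a)
      rwa [f.apply_symm_apply, add_comm] at h
    -- with the same multiplicity function
    have hmult : multFn (quadRes p) (quadRes p) f = multFn (quadRes p) (quadRes p) f.symm := by
      funext x
      exact Nat.card_congr (Equiv.subtypeEquiv f (by
        intro a
        rw [f.symm_apply_apply, add_comm]))
    -- acyclicity forces f to be an involution
    have hfeq : f = f.symm := hacyc f.symm hmatch' hmult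
    have hinv : ∀ a : ↥(quadRes p), f (f a) = a := by
      intro a
      nth_rewrite 1 [hfeq]
      exact f.symm_apply_apply a
    -- f has no fixed point since 2 is a quadratic residue
    have hfpf : ∀ a : ↥(quadRes p), f a ≠ a := by
      intro a h
      have hm := hmatch a
      rw [h] at hm
      apply hm
      have : (a : ZMod p) + (a : ZMod p) = 2 * (a : ZMod p) := by ring
      rw [this]
      exact quadRes_mul_mem hp (two_mem_quadRes hp hmod) a.2
    -- transfer f to a function on `ZMod p`
    classical
    set F : ZMod p → ZMod p := fun x => if h : x ∈ (quadRes p) then ((f ⟨x, h⟩ : ↥(quadRes p)) : ZMod p) else x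
      with hF
    have hFmaps : ∀ x ∈ (quadRes p), F x ∈ (quadRes p) := by
      intro x hx
      rw [hF]
      simp only [dif_pos hx]
      exact (f ⟨x, hx⟩).2
    have hFinv : ∀ x ∈ (quadRes p), F (F x) = x := by
      intro x hx
      have h1 : F x = ((f ⟨x, hx⟩ : ↥(quadRes p)) : ZMod p) := by rw [hF]; simp only [dif_pos hx]
      have h2 : F x ∈ (quadRes p) := hFmaps x hx
      rw [hF]
      simp only [dif_pos h2]
      have : (⟨F x, h2⟩ : ↥(quadRes p)) = f ⟨x, hx⟩ := Subtype.ext h1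
      simp only [dif_pos hx, dif_pos (f ⟨x, hx⟩).2, Subtype.coe_eta, hinv]
    have hFfpf : ∀ x ∈ (quadRes p), F x ≠ x := by
      intro x hx h
      have h1 : F x = ((f ⟨x, hx⟩ : ↥(quadRes p)) : ZMod p) := by rw [hF]; simp only [dif_pos hx]
      apply hfpf ⟨x, hx⟩
      exact Subtype.ext (by rw [← h1, h])
    have heven : Even (quadRes p).card :=
      even_card_of_fpf_involution (quadRes p).card (quadRes p) rfl F hFmaps hFinv hFfpf
    have hcard := card_quadRes hp (by omega)
    rcases heven with ⟨k, hk⟩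
    omega
  refine ⟨?_, key⟩
  intro H
  exact key (H (quadRes p) (quadRes p) rfl (Finset.notMem_erase 0 _))
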